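/- arXiv:1410.8740 — 2 statements merged into one kernel-verified Lean document; each statement's English description precedes it below -/
import Mathlib

section
/- For the Two-component copula Z(u,v) = ∫_0^∞ F_{G1}(w/(u^{-1/α1} - 1)) F_{G2}(w/(v^{-1/α2} - 1)) e^{-w} dw on (0,1)^2 (the copula of (-X1, -X2)), the mixed second partial derivative is z(u,v) = [u^{-(1/α1+1)} v^{-(1/α2+1)} (u^{-1/α1} - 1)^{α2} (v^{-1/α2} - 1)^{α1}] / [(α1+α2+1) B(α1+1, α2+1) (u^{-1/α1} v^{-1/α2} - 1)^{α1+α2+1}]. -/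
open MeasureTheory ProbabilityTheory Real Set

/-- The cdf of the gamma distribution (removed from Mathlib; restored with its old definition). -/
noncomputable def ProbabilityTheory.gammaCDFReal (a r : ℝ) : StieltjesFunction ℝ :=
  cdf (gammaMeasure a r)

/-- The copula of `(-X1,-X2)` in the Two-component model. -/
noncomputable def twoComponentZ (α1 α2 : ℝ) (u v : ℝ) : ℝ :=
  ∫ w in Ioi (0 : ℝ),
    ProbabilityTheory.gammaCDFReal α1 1 (w / (u ^ (-(1 / α1)) - 1)) *
      ProbabilityTheory.gammaCDFReal α2 1 (w / (v ^ (-(1 / α2)) - 1)) * Real.exp (-w)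

open Filter

namespace TCAux

lemma pdf_nonneg {α : ℝ} (hα : 0 < α) (y : ℝ) : 0 ≤ gammaPDFReal α 1 y :=
  gammaPDFReal_nonneg hα one_pos y

lemma pdf_eq_pos {α : ℝ} {y : ℝ} (hy : 0 ≤ y) :
    gammaPDFReal α 1 y = y ^ (α - 1) * Real.exp (-y) / Real.Gamma α := by
  simp only [gammaPDFReal, if_pos hy, one_rpow, one_mul]
  ring

lemma pdf_le {α : ℝ} (hα : 0 < α) {y : ℝ} (hy : 0 ≤ y) :
    gammaPDFReal α 1 y ≤ y ^ (α - 1) / Real.Gamma α := by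
  rw [pdf_eq_pos hy]
  have h1 : Real.exp (-y) ≤ 1 := Real.exp_le_one_iff.mpr (by linarith)
  have hΓ : 0 < Real.Gamma α := Real.Gamma_pos_of_pos hα
  have hp : 0 ≤ y ^ (α - 1) := Real.rpow_nonneg hy _
  calc y ^ (α - 1) * Real.exp (-y) / Real.Gamma α
      ≤ y ^ (α - 1) * 1 / Real.Gamma α := by gcongr
    _ = y ^ (α - 1) / Real.Gamma α := by ring

lemma integrable_pdf {α : ℝ} (hα : 0 < α) : Integrable (gammaPDFReal α 1) := by
  refine ⟨(measurable_gammaPDFReal α 1).aestronglyMeasurable, ?_⟩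
  rw [hasFiniteIntegral_iff_ofReal (ae_of_all _ (pdf_nonneg hα))]
  have := lintegral_gammaPDF_eq_one hα one_pos
  simp only [gammaPDF] at this
  rw [this]
  exact ENNReal.one_lt_top

lemma cdf_eq_intervalIntegral {α : ℝ} (hα : 0 < α) (x : ℝ) :
    gammaCDFReal α 1 x = ∫ t in (0:ℝ)..x, gammaPDFReal α 1 t := by
  have hint := integrable_pdf hα
  have h0 : (∫ t in Iic (0:ℝ), gammaPDFReal α 1 t) = 0 := by
    have hne : ∀ᵐ t : ℝ, t ≠ 0 := by
      refine ae_iff.mpr ?_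
      have hs : {a : ℝ | ¬ a ≠ 0} = {(0:ℝ)} := by ext t; simp
      rw [hs, Real.volume_singleton]
    have : (∫ t in Iic (0:ℝ), gammaPDFReal α 1 t) = ∫ _t in Iic (0:ℝ), (0:ℝ) := by
      refine setIntegral_congr_ae measurableSet_Iic ?_
      filter_upwards [hne] with t ht hts
      rw [gammaPDFReal, if_neg]
      exact not_le.mpr (lt_of_le_of_ne hts ht)
    simp [this]
  have key := intervalIntegral.integral_Iic_sub_Iic
    (f := gammaPDFReal α 1) (μ := volume) (a := 0) (b := x)
    hint.integrableOn hint.integrableOn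
  rw [h0, sub_zero] at key
  rw [show gammaCDFReal α 1 x = cdf (gammaMeasure α 1) x from rfl,
    cdf_gammaMeasure_eq_integral hα one_pos, key]

lemma hasDerivAt_cdf {α : ℝ} (hα : 0 < α) {x : ℝ} (hx : 0 < x) :
    HasDerivAt (gammaCDFReal α 1) (gammaPDFReal α 1 x) x := by
  have hint : IntervalIntegrable (gammaPDFReal α 1) volume 0 x :=
    (integrable_pdf hα).intervalIntegrable
  have hcont : ContinuousAt (gammaPDFReal α 1) x := by
    have hc : ContinuousAt (fun y : ℝ => y ^ (α - 1) * Real.exp (-y) / Real.Gamma α) x := by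
      exact ((Real.continuousAt_rpow_const x (α - 1) (Or.inl (ne_of_gt hx))).mul
        ((Real.continuous_exp.comp continuous_neg).continuousAt)).div_const _
    refine hc.congr ?_
    filter_upwards [eventually_gt_nhds hx] with y hy
    rw [pdf_eq_pos hy.le]
  have h := intervalIntegral.integral_hasDerivAt_right hint
    (measurable_gammaPDFReal α 1).aestronglyMeasurable.stronglyMeasurableAtFilter hcont
  exact h.congr_of_eventuallyEq (Filter.Eventually.of_forall fun y =>
    (cdf_eq_intervalIntegral hα y))


noncomputable def S (α u : ℝ) : ℝ := u ^ (-(1/α)) - 1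
noncomputable def c (α u : ℝ) : ℝ := 1/α * u ^ (-(1/α) - 1) / (S α u)^2

variable {α u : ℝ}

lemma S_pos (hα : 0 < α) (hu : u ∈ Ioo (0:ℝ) 1) : 0 < S α u := by
  have : 1 < u ^ (-(1/α)) := by
    rw [Real.one_lt_rpow_iff_of_pos hu.1]
    exact Or.inr ⟨hu.2, neg_lt_zero.mpr (by positivity)⟩
  simpa [S] using this

lemma S_antitone (hα : 0 < α) {x y : ℝ} (hx : 0 < x) (hxy : x ≤ y) : S α y ≤ S α x := by
  have h := Real.rpow_le_rpow_of_nonpos hx hxy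
    (neg_nonpos.mpr (by positivity : (0:ℝ) ≤ 1/α))
  exact sub_le_sub_right h 1

lemma c_pos (hα : 0 < α) (hu : u ∈ Ioo (0:ℝ) 1) : 0 < c α u := by
  have h1 := S_pos hα hu
  have h2 : 0 < u ^ (-(1/α) - 1) := Real.rpow_pos_of_pos hu.1 _
  unfold c; positivity

lemma hasDerivAt_S (hα : 0 < α) (hu : 0 < u) :
    HasDerivAt (fun x => S α x) (-(1/α) * u ^ (-(1/α) - 1)) u :=
  (Real.hasDerivAt_rpow_const (Or.inl hu.ne')).sub_const 1

lemma hasDerivAt_inner (hα : 0 < α) (hu : u ∈ Ioo (0:ℝ) 1) (w : ℝ) :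
    HasDerivAt (fun x => w / S α x) (w * c α u) u := by
  have hS := S_pos hα hu
  have h := ((hasDerivAt_S hα hu.1).inv hS.ne').const_mul w
  have : ∀ x : ℝ, w * (S α x)⁻¹ = w / S α x := fun x => (div_eq_mul_inv w _).symm
  have h2 := h.congr_of_eventuallyEq (Eventually.of_forall fun x => (this x).symm)
  refine h2.congr_deriv ?_
  unfold c
  field_simp


lemma cdf_nonneg' (x : ℝ) : 0 ≤ gammaCDFReal α 1 x := cdf_nonneg _ x
lemma cdf_le_one' (x : ℝ) : gammaCDFReal α 1 x ≤ 1 := cdf_le_one _ x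

lemma hasDerivAt_sliceCDF (hα : 0 < α) (hu : u ∈ Ioo (0:ℝ) 1) {w : ℝ} (hw : 0 < w) :
    HasDerivAt (fun x => gammaCDFReal α 1 (w / S α x))
      (gammaPDFReal α 1 (w / S α u) * (w * c α u)) u :=
  (hasDerivAt_cdf hα (div_pos hw (S_pos hα hu))).comp u (hasDerivAt_inner hα hu w)

lemma integrableOn_rpow_exp {p : ℝ} (hp : -1 < p) :
    IntegrableOn (fun w : ℝ => w ^ p * Real.exp (-w)) (Ioi (0:ℝ)) := by
  have h := Real.GammaIntegral_convergent (by linarith : (0:ℝ) < p + 1)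
  refine h.congr_fun (fun x _ => ?_) measurableSet_Ioi
  rw [add_sub_cancel_right, mul_comm]

lemma div_rpow_helper {w s : ℝ} (e : ℝ) (hw : 0 ≤ w) (hs : 0 < s) :
    (w/s) ^ e = w ^ e * s ^ (-e) := by
  rw [Real.div_rpow hw hs.le, Real.rpow_neg hs.le, div_eq_mul_inv]

lemma measurable_slice_pdf (α s : ℝ) : Measurable (fun w => gammaPDFReal α 1 (w / s)) :=
  (measurable_gammaPDFReal α 1).comp (measurable_id.div_const s)

lemma measurable_slice_cdf (α s : ℝ) : Measurable (fun w => gammaCDFReal α 1 (w / s)) :=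
  (gammaCDFReal α 1).mono.measurable.comp (measurable_id.div_const s)

lemma gen {p Cg : ℝ} (hα : 0 < α) (hu : u ∈ Ioo (0:ℝ) 1)
    {g : ℝ → ℝ} (hg : Measurable g) (hp : 0 ≤ p) (hCg : 0 ≤ Cg)
    (hg0 : ∀ w, 0 < w → 0 ≤ g w) (hgb : ∀ w, 0 < w → g w ≤ Cg * w ^ p) :
    HasDerivAt (fun x => ∫ w in Ioi (0:ℝ),
        gammaCDFReal α 1 (w / S α x) * (g w * Real.exp (-w)))
      (∫ w in Ioi (0:ℝ),
        gammaPDFReal α 1 (w / S α u) * (w * c α u) * (g w * Real.exp (-w))) u := by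
  obtain ⟨hu0, hu1⟩ := hu
  set l : ℝ := u/2 with hl_def
  set h : ℝ := (1+u)/2 with hh_def
  have hl0 : 0 < l := by positivity
  have hh1 : h < 1 := by rw [hh_def]; linarith
  have hh0 : 0 < h := by rw [hh_def]; linarith
  have hlu : l < u := by rw [hl_def]; linarith
  have huh : u < h := by rw [hh_def]; linarith
  set ε : ℝ := min (u/2) ((1-u)/2) with hε_def
  have hε0 : 0 < ε := lt_min (by linarith) (by linarith)
  have hball : Metric.ball u ε ⊆ Ioo l h := by
    rw [Real.ball_eq_Ioo]
    apply Ioo_subset_Ioo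
    · have := min_le_left (u/2) ((1-u)/2); rw [hl_def]; linarith
    · have := min_le_right (u/2) ((1-u)/2); rw [hh_def]; linarith
  set m : ℝ := S α h with hm_def
  set M : ℝ := S α l with hM_def
  have hm0 : 0 < m := S_pos hα ⟨hh0, hh1⟩
  have hM0 : 0 < M := S_pos hα ⟨hl0, by linarith⟩
  set Cc : ℝ := 1/α * l ^ (-(1/α) - 1) / m^2 with hCc_def
  have hCc0 : 0 < Cc := by
    have : 0 < l ^ (-(1/α) - 1) := Real.rpow_pos_of_pos hl0 _
    rw [hCc_def]; positivity
  have hΓ : 0 < Real.Gamma α := Real.Gamma_pos_of_pos hα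
  -- facts about x in the interval
  have hSx : ∀ x ∈ Ioo l h, 0 < S α x ∧ m ≤ S α x ∧ S α x ≤ M := fun x hx =>
    ⟨S_pos hα ⟨hl0.trans hx.1, hx.2.trans hh1⟩,
     S_antitone hα (hl0.trans hx.1) hx.2.le,
     S_antitone hα hl0 hx.1.le⟩
  have hcx : ∀ x ∈ Ioo l h, 0 < c α x ∧ c α x ≤ Cc := by
    intro x hx
    have hx01 : x ∈ Ioo (0:ℝ) 1 := ⟨hl0.trans hx.1, hx.2.trans hh1⟩
    refine ⟨c_pos hα hx01, ?_⟩
    rw [hCc_def]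
    unfold c
    have h1 : x ^ (-(1/α) - 1) ≤ l ^ (-(1/α) - 1) :=
      Real.rpow_le_rpow_of_nonpos hl0 hx.1.le (by
        have : (0:ℝ) ≤ 1/α := by positivity
        linarith)
    have h2 : m^2 ≤ (S α x)^2 := by
      have := (hSx x hx).2.1
      nlinarith [hm0]
    have hnum : 1/α * x ^ (-(1/α) - 1) ≤ 1/α * l ^ (-(1/α) - 1) :=
      mul_le_mul_of_nonneg_left h1 (by positivity)
    have hlp : 0 < l ^ (-(1/α) - 1) := Real.rpow_pos_of_pos hl0 _
    exact div_le_div₀ (by positivity) hnum (by positivity) h2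
  -- the pointwise bound for the derivative integrand
  have key : ∀ w, 0 < w → ∀ x ∈ Ioo l h,
      gammaPDFReal α 1 (w / S α x) * (w * c α x) * (g w * Real.exp (-w))
        ≤ (M ^ (1-α) + m ^ (1-α)) / Real.Gamma α * Cc * Cg
            * (w ^ (α + p) * Real.exp (-w)) := by
    intro w hw x hx
    obtain ⟨hS0, hSm, hSM⟩ := hSx x hx
    obtain ⟨hc0, hcC⟩ := hcx x hx
    have hwS : 0 < w / S α x := div_pos hw hS0
    have hA : gammaPDFReal α 1 (w / S α x)
        ≤ (w ^ (α-1) * M ^ (1-α) + w ^ (α-1) * m ^ (1-α)) / Real.Gamma α := by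
      refine (pdf_le hα hwS.le).trans ?_
      have hwm : w / S α x ≤ w / m := by gcongr
      have hwM : w / M ≤ w / S α x := by gcongr
      have e1 : (w/M) ^ (α-1) = w ^ (α-1) * M ^ (1-α) := by
        rw [div_rpow_helper _ hw.le hM0, neg_sub]
      have e2 : (w/m) ^ (α-1) = w ^ (α-1) * m ^ (1-α) := by
        rw [div_rpow_helper _ hw.le hm0, neg_sub]
      have hnn1 : (0:ℝ) ≤ w ^ (α-1) * M ^ (1-α) := by positivity
      have hnn2 : (0:ℝ) ≤ w ^ (α-1) * m ^ (1-α) := by positivity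
      rcases le_total α 1 with hα1 | hα1
      · have : (w / S α x) ^ (α-1) ≤ (w/M) ^ (α-1) :=
          Real.rpow_le_rpow_of_nonpos (div_pos hw hM0) hwM (by linarith)
        rw [e1] at this
        gcongr
        linarith
      · have : (w / S α x) ^ (α-1) ≤ (w/m) ^ (α-1) :=
          Real.rpow_le_rpow hwS.le hwm (by linarith)
        rw [e2] at this
        gcongr
        linarith
    have hB : w * c α x ≤ w * Cc := by gcongr
    have hC : g w * Real.exp (-w) ≤ Cg * w ^ p * Real.exp (-w) := by
      have := hgb w hw
      gcongr
    have hprod : gammaPDFReal α 1 (w / S α x) * (w * c α x) * (g w * Real.exp (-w))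
        ≤ (w ^ (α-1) * M ^ (1-α) + w ^ (α-1) * m ^ (1-α)) / Real.Gamma α
            * (w * Cc) * (Cg * w ^ p * Real.exp (-w)) := by
      have hpdfnn := pdf_nonneg hα (w / S α x)
      have hgnn := hg0 w hw
      have h1 : (0:ℝ) ≤ w * c α x := by positivity
      have h2 : (0:ℝ) ≤ g w * Real.exp (-w) := by positivity
      exact mul_le_mul (mul_le_mul hA hB h1 (by positivity)) hC h2 (by positivity)
    refine hprod.trans (le_of_eq ?_)
    have hwpow : w ^ (α - 1) * w * w ^ p = w ^ (α + p) := by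
      rw [show w ^ (α-1) * w * w ^ p = w ^ (α-1) * w ^ (1:ℝ) * w ^ p by rw [Real.rpow_one],
        ← Real.rpow_add hw, ← Real.rpow_add hw]
      ring_nf
    rw [← hwpow]; ring
  -- now apply the dominated differentiation theorem
  have main := hasDerivAt_integral_of_dominated_loc_of_deriv_le
    (F := fun x w => gammaCDFReal α 1 (w / S α x) * (g w * Real.exp (-w)))
    (F' := fun x w => gammaPDFReal α 1 (w / S α x) * (w * c α x) * (g w * Real.exp (-w)))
    (x₀ := u) (s := Metric.ball u ε) (μ := volume.restrict (Ioi (0:ℝ)))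
    (bound := fun w => (M ^ (1-α) + m ^ (1-α)) / Real.Gamma α * Cc * Cg
      * (w ^ (α + p) * Real.exp (-w)))
    (Metric.ball_mem_nhds u hε0)
    (Eventually.of_forall fun x =>
      (((measurable_slice_cdf α (S α x)).mul
        (hg.mul (measurable_neg.exp))).aestronglyMeasurable))
    ?_ ?_ ?_ ?_ ?_
  · exact main.2
  · -- integrability of F u
    refine Integrable.mono
      ((integrableOn_rpow_exp (by linarith : (-1:ℝ) < p)).const_mul Cg) 
      (((measurable_slice_cdf α (S α u)).mul (hg.mul (measurable_neg.exp))).aestronglyMeasurable) ?_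
    refine (ae_restrict_iff' measurableSet_Ioi).mpr (ae_of_all _ fun w hw => ?_)
    have hw : (0:ℝ) < w := hw
    have h1 : 0 ≤ gammaCDFReal α 1 (w / S α u) * (g w * Real.exp (-w)) := by
      have := hg0 w hw
      have := cdf_nonneg' (α := α) (w / S α u)
      positivity
    have h2 : gammaCDFReal α 1 (w / S α u) * (g w * Real.exp (-w))
        ≤ Cg * (w ^ p * Real.exp (-w)) := by
      have hb := hgb w hw
      have hc1 := cdf_le_one' (α := α) (w / S α u)
      have hc0 := cdf_nonneg' (α := α) (w / S α u)
      have he : (0:ℝ) < Real.exp (-w) := Real.exp_pos _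
      calc gammaCDFReal α 1 (w / S α u) * (g w * Real.exp (-w))
          ≤ 1 * (Cg * w ^ p * Real.exp (-w)) := by
            have hgnn := hg0 w hw
            have he' : (0:ℝ) ≤ Real.exp (-w) := he.le
            refine mul_le_mul hc1 ?_ (by positivity) zero_le_one
            gcongr
        _ = Cg * (w ^ p * Real.exp (-w)) := by ring
    rw [Real.norm_eq_abs, Real.norm_eq_abs, abs_of_nonneg h1, abs_of_nonneg (by positivity)]
    exact h2
  · -- measurability of F' u
    exact (((measurable_slice_pdf α (S α u)).mul
      ((measurable_id.mul_const _))).mul (hg.mul (measurable_neg.exp))).aestronglyMeasurable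
  · -- the bound
    refine (ae_restrict_iff' measurableSet_Ioi).mpr (ae_of_all _ fun w hw => ?_)
    intro x hxball
    have hw : (0:ℝ) < w := hw
    have hx := hball hxball
    have hnn : 0 ≤ gammaPDFReal α 1 (w / S α x) * (w * c α x) * (g w * Real.exp (-w)) := by
      have := pdf_nonneg hα (w / S α x)
      have := (hcx x hx).1
      have := hg0 w hw
      positivity
    rw [Real.norm_eq_abs, abs_of_nonneg hnn]
    exact key w hw x hx
  · -- integrability of bound
    exact (integrableOn_rpow_exp (by linarith : (-1:ℝ) < α + p)).const_mul _
  · -- differentiability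
    refine (ae_restrict_iff' measurableSet_Ioi).mpr (ae_of_all _ fun w hw => ?_)
    intro x hxball
    have hw : (0:ℝ) < w := hw
    have hx := hball hxball
    exact (hasDerivAt_sliceCDF hα ⟨hl0.trans hx.1, hx.2.trans hh1⟩ hw).mul_const _


set_option maxHeartbeats 1600000 in
lemma final_integral {α1 α2 u v : ℝ} (hα1 : 0 < α1) (hα2 : 0 < α2)
    (hu : u ∈ Ioo (0:ℝ) 1) (hv : v ∈ Ioo (0:ℝ) 1) :
    (∫ w in Ioi (0:ℝ), gammaPDFReal α2 1 (w / S α2 v) * (w * c α2 v)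
        * (gammaPDFReal α1 1 (w / S α1 u) * (w * c α1 u) * Real.exp (-w)))
      = u ^ (-(1 / α1 + 1)) * v ^ (-(1 / α2 + 1)) * (u ^ (-(1 / α1)) - 1) ^ α2
          * (v ^ (-(1 / α2)) - 1) ^ α1
        / ((α1 + α2 + 1)
            * (Real.Gamma (α1 + 1) * Real.Gamma (α2 + 1) / Real.Gamma (α1 + α2 + 2))
            * (u ^ (-(1 / α1)) * v ^ (-(1 / α2)) - 1) ^ (α1 + α2 + 1)) := by
  have hs1 : 0 < S α1 u := S_pos hα1 hu
  have hs2 : 0 < S α2 v := S_pos hα2 hv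
  set s1 : ℝ := S α1 u with hs1_def
  set s2 : ℝ := S α2 v with hs2_def
  set a : ℝ := α1 + α2 + 1 with ha_def
  have ha0 : 0 < a := by rw [ha_def]; linarith
  set r : ℝ := 1 + s1⁻¹ + s2⁻¹ with hr_def
  have hr0 : 0 < r := by
    have := inv_pos.mpr hs1
    have := inv_pos.mpr hs2
    rw [hr_def]; linarith
  set Kc : ℝ := c α1 u * c α2 v * s1 ^ ((1:ℝ) - α1) * s2 ^ ((1:ℝ) - α2)
      / (Real.Gamma α1 * Real.Gamma α2) with hKc_def
  have hptwise : ∀ w ∈ Ioi (0:ℝ),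
      gammaPDFReal α2 1 (w / s2) * (w * c α2 v)
        * (gammaPDFReal α1 1 (w / s1) * (w * c α1 u) * Real.exp (-w))
      = Kc * (w ^ (a - 1) * Real.exp (-(r * w))) := by
    intro w hw
    have hw : (0:ℝ) < w := hw
    rw [pdf_eq_pos (div_pos hw hs2).le, pdf_eq_pos (div_pos hw hs1).le,
      div_rpow_helper _ hw.le hs2, div_rpow_helper _ hw.le hs1, neg_sub, neg_sub]
    have hexp : Real.exp (-(w/s2)) * Real.exp (-(w/s1)) * Real.exp (-w)
        = Real.exp (-(r * w)) := by
      rw [← Real.exp_add, ← Real.exp_add]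
      congr 1
      rw [hr_def]
      field_simp
      ring
    have hpow : w ^ (α2 - 1) * w ^ (α1 - 1) * w * w = w ^ (a - 1) := by
      have h2 : w ^ (α2-1) * w ^ (α1-1) * w ^ (1:ℝ) * w ^ (1:ℝ)
          = w ^ ((α2-1) + (α1-1) + 1 + 1) := by
        rw [Real.rpow_add hw, Real.rpow_add hw, Real.rpow_add hw]
      rw [Real.rpow_one] at h2
      rw [h2]
      congr 1
      rw [ha_def]; ring
    rw [hKc_def, ← hexp, ← hpow]
    ring
  rw [setIntegral_congr_fun measurableSet_Ioi hptwise, integral_const_mul,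
    integral_rpow_mul_exp_neg_mul_Ioi ha0 hr0]
  -- now the algebra
  have h1s1 : u ^ (-(1/α1)) = s1 + 1 := by rw [hs1_def]; unfold S; ring
  have h1s2 : v ^ (-(1/α2)) = s2 + 1 := by rw [hs2_def]; unfold S; ring
  set P : ℝ := s1 * s2 + s1 + s2 with hP_def
  have hPpos : 0 < P := by
    have := mul_pos hs1 hs2
    rw [hP_def]; linarith
  have hP : u ^ (-(1/α1)) * v ^ (-(1/α2)) - 1 = P := by rw [h1s1, h1s2, hP_def]; ring
  have hrinv : (1:ℝ)/r = s1 * s2 / P := by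
    rw [hr_def, hP_def]
    field_simp
    ring
  have hra : ((1:ℝ)/r) ^ a = s1 ^ a * s2 ^ a / P ^ a := by
    rw [hrinv, Real.div_rpow (by positivity) hPpos.le, Real.mul_rpow hs1.le hs2.le]
  have hs1pow : s1 ^ ((1:ℝ) - α1) * s1 ^ a = s1 ^ α2 * s1 ^ 2 := by
    rw [← Real.rpow_natCast s1 2, ← Real.rpow_add hs1, ← Real.rpow_add hs1]
    congr 1
    rw [ha_def]; push_cast; ring
  have hs2pow : s2 ^ ((1:ℝ) - α2) * s2 ^ a = s2 ^ α1 * s2 ^ 2 := by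
    rw [← Real.rpow_natCast s2 2, ← Real.rpow_add hs2, ← Real.rpow_add hs2]
    congr 1
    rw [ha_def]; push_cast; ring
  have hΓ1 : Real.Gamma (α1 + 1) = α1 * Real.Gamma α1 := Real.Gamma_add_one hα1.ne'
  have hΓ2 : Real.Gamma (α2 + 1) = α2 * Real.Gamma α2 := Real.Gamma_add_one hα2.ne'
  have hΓa : Real.Gamma (α1 + α2 + 2) = a * Real.Gamma a := by
    rw [show α1 + α2 + 2 = a + 1 by rw [ha_def]; ring, Real.Gamma_add_one (by linarith)]
  have hue : u ^ (-(1/α1 + 1)) = u ^ (-(1/α1) - 1) := by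
    congr 1; ring
  have hve : v ^ (-(1/α2 + 1)) = v ^ (-(1/α2) - 1) := by
    congr 1; ring
  rw [hKc_def, hra, hP, hΓ1, hΓ2, hΓa, hue, hve,
    show (u ^ (-(1/α1)) - 1 : ℝ) = s1 from hs1_def ▸ rfl,
    show (v ^ (-(1/α2)) - 1 : ℝ) = s2 from hs2_def ▸ rfl]
  unfold c
  rw [← hs1_def, ← hs2_def]
  have hΓ1p : 0 < Real.Gamma α1 := Real.Gamma_pos_of_pos hα1
  have hΓ2p : 0 < Real.Gamma α2 := Real.Gamma_pos_of_pos hα2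
  have hΓap : 0 < Real.Gamma a := Real.Gamma_pos_of_pos ha0
  have hPa : 0 < P ^ a := Real.rpow_pos_of_pos hPpos a
  have hs1a2 : 0 < s1 ^ α2 := Real.rpow_pos_of_pos hs1 _
  have hs2a1 : 0 < s2 ^ α1 := Real.rpow_pos_of_pos hs2 _
  have hs1a : (0:ℝ) < s1 ^ a := Real.rpow_pos_of_pos hs1 _
  have hs2a : (0:ℝ) < s2 ^ a := Real.rpow_pos_of_pos hs2 _
  have hs1e : s1 ^ ((1:ℝ) - α1) = s1 ^ α2 * s1 ^ 2 / s1 ^ a := by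
    rw [← hs1pow]; field_simp
  have hs2e : s2 ^ ((1:ℝ) - α2) = s2 ^ α1 * s2 ^ 2 / s2 ^ a := by
    rw [← hs2pow]; field_simp
  rw [hs1e, hs2e]
  field_simp


lemma derivA {α1 α2 u v' : ℝ} (hα1 : 0 < α1) (hα2 : 0 < α2)
    (hu : u ∈ Ioo (0:ℝ) 1) (hv' : v' ∈ Ioo (0:ℝ) 1) :
    HasDerivAt (fun u' => twoComponentZ α1 α2 u' v')
      (∫ w in Ioi (0:ℝ), gammaPDFReal α1 1 (w / S α1 u) * (w * c α1 u)
        * (gammaCDFReal α2 1 (w / S α2 v') * Real.exp (-w))) u := by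
  have h := gen (p := 0) (Cg := 1) hα1 hu
    (g := fun w => gammaCDFReal α2 1 (w / S α2 v'))
    (measurable_slice_cdf α2 (S α2 v')) le_rfl zero_le_one
    (fun w _ => cdf_nonneg' _) (fun w hw => by
      rw [Real.rpow_zero, mul_one]; exact cdf_le_one' _)
  refine h.congr_of_eventuallyEq (Eventually.of_forall fun x => ?_)
  unfold twoComponentZ S
  exact integral_congr_ae (ae_of_all _ fun w => by ring)

lemma derivB {α1 α2 u v : ℝ} (hα1 : 0 < α1) (hα2 : 0 < α2)
    (hu : u ∈ Ioo (0:ℝ) 1) (hv : v ∈ Ioo (0:ℝ) 1) :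
    HasDerivAt (fun v'' => ∫ w in Ioi (0:ℝ),
        gammaPDFReal α1 1 (w / S α1 u) * (w * c α1 u)
          * (gammaCDFReal α2 1 (w / S α2 v'') * Real.exp (-w)))
      (∫ w in Ioi (0:ℝ), gammaPDFReal α2 1 (w / S α2 v) * (w * c α2 v)
        * (gammaPDFReal α1 1 (w / S α1 u) * (w * c α1 u) * Real.exp (-w))) v := by
  have hs1 : 0 < S α1 u := S_pos hα1 hu
  have hc1 : 0 < c α1 u := c_pos hα1 hu
  have hΓ1 : 0 < Real.Gamma α1 := Real.Gamma_pos_of_pos hα1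
  have hCg : 0 ≤ (S α1 u) ^ ((1:ℝ) - α1) * c α1 u / Real.Gamma α1 := by
    have := Real.rpow_pos_of_pos hs1 ((1:ℝ) - α1)
    positivity
  have h := gen (p := α1) (Cg := (S α1 u) ^ ((1:ℝ) - α1) * c α1 u / Real.Gamma α1)
    hα2 hv (g := fun w => gammaPDFReal α1 1 (w / S α1 u) * (w * c α1 u))
    ((measurable_slice_pdf α1 (S α1 u)).mul (measurable_id.mul_const _))
    hα1.le hCg
    (fun w hw => mul_nonneg (pdf_nonneg hα1 _) (by positivity))
    (fun w hw => ?_)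
  · refine h.congr_of_eventuallyEq (Eventually.of_forall fun x => ?_)
    exact integral_congr_ae (ae_of_all _ fun w => by ring)
  · have hww := Real.rpow_add_one hw.ne' (α1 - 1)
    rw [sub_add_cancel] at hww
    calc gammaPDFReal α1 1 (w / S α1 u) * (w * c α1 u)
        ≤ (w / S α1 u) ^ (α1 - 1) / Real.Gamma α1 * (w * c α1 u) :=
          mul_le_mul_of_nonneg_right (pdf_le hα1 (div_pos hw hs1).le) (by positivity)
      _ = (S α1 u) ^ ((1:ℝ) - α1) * c α1 u / Real.Gamma α1 * w ^ α1 := by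
          rw [div_rpow_helper _ hw.le hs1, neg_sub, hww]; ring

end TCAux

open TCAux in
/-- Density of the copula `Z` of `(-X1,-X2)`: for `(u,v) ∈ (0,1)²`,
`z(u,v) = ∂²Z/∂u∂v` equals the stated closed form involving the Beta function. -/
theorem twoComponentZ_density {α1 α2 : ℝ} (hα1 : 0 < α1) (hα2 : 0 < α2)
    (u v : ℝ) (hu : u ∈ Ioo (0:ℝ) 1) (hv : v ∈ Ioo (0:ℝ) 1) :
    deriv (fun v' : ℝ => deriv (fun u' : ℝ => twoComponentZ α1 α2 u' v') u) v
      = u ^ (-(1 / α1 + 1)) * v ^ (-(1 / α2 + 1)) * (u ^ (-(1 / α1)) - 1) ^ α2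
          * (v ^ (-(1 / α2)) - 1) ^ α1
        / ((α1 + α2 + 1)
            * (Real.Gamma (α1 + 1) * Real.Gamma (α2 + 1) / Real.Gamma (α1 + α2 + 2))
            * (u ^ (-(1 / α1)) * v ^ (-(1 / α2)) - 1) ^ (α1 + α2 + 1)) := by
  have hev : (fun v' => deriv (fun u' => twoComponentZ α1 α2 u' v') u) =ᶠ[nhds v]
      (fun v' => ∫ w in Ioi (0:ℝ), gammaPDFReal α1 1 (w / S α1 u) * (w * c α1 u)
        * (gammaCDFReal α2 1 (w / S α2 v') * Real.exp (-w))) := by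
    filter_upwards [isOpen_Ioo.mem_nhds hv] with v' hv'
    exact (derivA hα1 hα2 hu hv').deriv
  rw [hev.deriv_eq, (derivB hα1 hα2 hu hv).deriv]
  exact final_integral hα1 hα2 hu hv
end

section
/- Let W, G1, G2 be independent with W ~ Exp(1) and Gi ~ Gamma(αi,1), αi > 0. Then U = (1 + W/G1)^{α1} and V = (1 + W/G2)^{α2} have the Two-component copula with parameters α1, α2. -/
open MeasureTheory ProbabilityTheory Real Set

/-- The Two-component copula with parameters `α1 α2` (formula valid on `(0,1)²`). -/
noncomputable def twoComponentCopula (α1 α2 : ℝ) (u1 u2 : ℝ) : ℝ :=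
  u1 + u2 - 1 + ∫ w in Ioi (0 : ℝ),
    ProbabilityTheory.gammaCDFReal α1 1 (w / ((1 - u1) ^ (-(1 / α1)) - 1)) *
      ProbabilityTheory.gammaCDFReal α2 1 (w / ((1 - u2) ^ (-(1 / α2)) - 1)) *
        Real.exp (-w)

open scoped ENNReal NNReal

section TCAux

lemma tc_measurable_gammaPDF (a r : ℝ) : Measurable (gammaPDF a r) :=
  (measurable_gammaPDFReal a r).ennreal_ofReal

lemma tc_gammaMeasure_singleton (a r x : ℝ) : gammaMeasure a r {x} = 0 := by
  rw [gammaMeasure, withDensity_apply _ (measurableSet_singleton x)]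
  exact setLIntegral_measure_zero _ _ (measure_singleton x)

lemma tc_gammaMeasure_Iic_nonpos {a r x : ℝ} (hx : x ≤ 0) : gammaMeasure a r (Iic x) = 0 := by
  rw [gammaMeasure, withDensity_apply _ measurableSet_Iic,
      setLIntegral_congr (Iio_ae_eq_Iic (a := x)).symm,
      lintegral_gammaPDF_of_nonpos hx]

lemma tc_gammaMeasure_Ici_toReal {a : ℝ} (ha : 0 < a) (x : ℝ) :
    ((gammaMeasure a 1) (Ici x)).toReal = 1 - gammaCDFReal a 1 x := by
  haveI := isProbabilityMeasure_gammaMeasure ha one_pos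
  have hIci : (Ici x : Set ℝ) = {x} ∪ Ioi x := by
    ext y; simp only [mem_Ici, mem_union, mem_singleton_iff, mem_Ioi]
    constructor
    · intro h; rcases eq_or_lt_of_le h with h | h; · exact Or.inl h.symm
      · exact Or.inr h
    · rintro (rfl | h); · exact le_refl _
      · exact h.le
  have h1 : gammaMeasure a 1 (Ici x) = gammaMeasure a 1 (Ioi x) := by
    rw [hIci, measure_union (by simp) measurableSet_Ioi, tc_gammaMeasure_singleton, zero_add]
  have h2 : gammaMeasure a 1 (Iic x) + gammaMeasure a 1 (Ioi x) = 1 := by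
    rw [← compl_Iic]
    rw [measure_add_measure_compl (μ := gammaMeasure a 1) (measurableSet_Iic (a := x))]
    exact measure_univ
  have h3 := congrArg ENNReal.toReal h2
  rw [ENNReal.toReal_add (measure_ne_top _ _) (measure_ne_top _ _), ENNReal.toReal_one] at h3
  rw [h1, gammaCDFReal, cdf_eq_real, measureReal_def]
  linarith

lemma tc_gammaMeasure_Ici_eq {a : ℝ} (ha : 0 < a) (x : ℝ) :
    (gammaMeasure a 1) (Ici x) = ENNReal.ofReal (1 - gammaCDFReal a 1 x) := by
  haveI := isProbabilityMeasure_gammaMeasure ha one_pos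
  rw [← tc_gammaMeasure_Ici_toReal ha, ENNReal.ofReal_toReal (measure_ne_top _ _)]

lemma tc_expMeasure_Ioi {t : ℝ} (ht : 0 ≤ t) :
    expMeasure 1 (Ioi t) = ENNReal.ofReal (exp (-t)) := by
  haveI := isProbabilityMeasure_expMeasure one_pos
  have hcdf : (expMeasure 1 (Iic t)).toReal = 1 - exp (-t) := by
    have := cdf_expMeasure_eq one_pos t
    rw [cdf_eq_real, measureReal_def] at this
    rw [this, if_pos ht, one_mul]
  have hIic : expMeasure 1 (Iic t) = ENNReal.ofReal (1 - exp (-t)) := by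
    rw [← hcdf, ENNReal.ofReal_toReal (measure_ne_top _ _)]
  have h2 : expMeasure 1 (Ioi t) = 1 - expMeasure 1 (Iic t) := by
    rw [← compl_Iic]; exact prob_compl_eq_one_sub measurableSet_Iic
  rw [h2, hIic, ← ENNReal.ofReal_one,
    ← ENNReal.ofReal_sub _ (by nlinarith [exp_le_one_iff.mpr (by linarith : -t ≤ 0)])]
  norm_num

lemma tc_meas_Ici (μ : Measure ℝ) {c : ℝ} (hc : 0 < c) :
    Measurable (fun w => μ (Ici (w / c))) := by
  have : Antitone (fun w => μ (Ici (w / c))) := fun x y hxy =>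
    measure_mono (Ici_subset_Ici.mpr (by gcongr))
  exact this.measurable

lemma tc_restrict_Ioi (f : ℝ → ℝ≥0∞) {a r : ℝ} :
    ∫⁻ w, gammaPDF a r w * f w = ∫⁻ w in Ioi 0, gammaPDF a r w * f w := by
  rw [← lintegral_add_compl (fun w => gammaPDF a r w * f w) (measurableSet_Ioi (a := (0:ℝ)))]
  have h0 : ∫⁻ w in (Ioi (0:ℝ))ᶜ, gammaPDF a r w * f w = 0 := by
    rw [compl_Ioi, setLIntegral_congr (Iio_ae_eq_Iic (a := (0:ℝ))).symm]
    rw [setLIntegral_congr_fun measurableSet_Iio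
      (fun x (hx : x < 0) => by rw [gammaPDF_of_neg hx, zero_mul])]
    simp
  rw [h0, add_zero]

lemma tc_exp_pdf_Ioi {w : ℝ} (hw : 0 ≤ w) : gammaPDF 1 1 w = ENNReal.ofReal (exp (-w)) := by
  rw [gammaPDF_of_nonneg hw]
  norm_num [Real.Gamma_one, Real.rpow_zero, Real.one_rpow]

lemma tc_joint_repr (μ1 μ2 : Measure ℝ) [IsProbabilityMeasure μ1] [IsProbabilityMeasure μ2]
    {c1 c2 : ℝ} (hc1 : 0 < c1) (hc2 : 0 < c2) :
    ((expMeasure 1).prod (μ1.prod μ2)) {p : ℝ × ℝ × ℝ | p.1 ≤ c1 * p.2.1 ∧ p.1 ≤ c2 * p.2.2}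
      = ∫⁻ w in Ioi 0, ENNReal.ofReal (exp (-w)) * (μ1 (Ici (w / c1)) * μ2 (Ici (w / c2))) := by
  have hset : MeasurableSet {p : ℝ × ℝ × ℝ | p.1 ≤ c1 * p.2.1 ∧ p.1 ≤ c2 * p.2.2} :=
    (measurableSet_le measurable_fst ((measurable_fst.comp measurable_snd).const_mul c1)).inter
      (measurableSet_le measurable_fst ((measurable_snd.comp measurable_snd).const_mul c2))
  rw [Measure.prod_apply hset]
  have hpre : ∀ w : ℝ, (Prod.mk w ⁻¹' {p : ℝ × ℝ × ℝ | p.1 ≤ c1 * p.2.1 ∧ p.1 ≤ c2 * p.2.2})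
      = Ici (w / c1) ×ˢ Ici (w / c2) := by
    intro w
    ext ⟨g1, g2⟩
    simp only [mem_preimage, mem_setOf_eq, mem_prod, mem_Ici]
    rw [div_le_iff₀ hc1, div_le_iff₀ hc2, mul_comm g1, mul_comm g2]
  simp_rw [hpre, Measure.prod_prod]
  rw [expMeasure, gammaMeasure,
    lintegral_withDensity_eq_lintegral_mul _ (tc_measurable_gammaPDF 1 1)
      (g := fun w => μ1 (Ici (w / c1)) * μ2 (Ici (w / c2)))
      ((tc_meas_Ici μ1 hc1).mul (tc_meas_Ici μ2 hc2))]
  simp only [Pi.mul_apply]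
  rw [tc_restrict_Ioi]
  exact setLIntegral_congr_fun measurableSet_Ioi
    (fun w (hw : 0 < w) => by simp [tc_exp_pdf_Ioi hw.le])

lemma tc_marg_repr (μ1 : Measure ℝ) [IsProbabilityMeasure μ1] {c1 : ℝ} (hc1 : 0 < c1) :
    ((expMeasure 1).prod μ1) {p : ℝ × ℝ | p.1 ≤ c1 * p.2}
      = ∫⁻ w in Ioi 0, ENNReal.ofReal (exp (-w)) * μ1 (Ici (w / c1)) := by
  have hset : MeasurableSet {p : ℝ × ℝ | p.1 ≤ c1 * p.2} :=
    measurableSet_le measurable_fst (measurable_snd.const_mul c1)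
  rw [Measure.prod_apply hset]
  have hpre : ∀ w : ℝ, (Prod.mk w ⁻¹' {p : ℝ × ℝ | p.1 ≤ c1 * p.2}) = Ici (w / c1) := by
    intro w; ext g
    simp only [mem_preimage, mem_setOf_eq, mem_Ici]
    rw [div_le_iff₀ hc1, mul_comm g]
  simp_rw [hpre]
  rw [expMeasure, gammaMeasure,
    lintegral_withDensity_eq_lintegral_mul _ (tc_measurable_gammaPDF 1 1) (tc_meas_Ici μ1 hc1)]
  simp only [Pi.mul_apply]
  rw [tc_restrict_Ioi]
  exact setLIntegral_congr_fun measurableSet_Ioi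
    (fun w (hw : 0 < w) => by simp [tc_exp_pdf_Ioi hw.le])

lemma tc_compl_value {a c : ℝ} (ha : 0 < a) (hc : 0 < c) :
    (((expMeasure 1).prod (gammaMeasure a 1)) {p : ℝ × ℝ | c * p.2 < p.1}).toReal
      = (1 + c) ^ (-a) := by
  haveI := isProbabilityMeasure_gammaMeasure ha one_pos
  haveI := isProbabilityMeasure_expMeasure one_pos
  have hset : MeasurableSet {p : ℝ × ℝ | c * p.2 < p.1} :=
    measurableSet_lt (measurable_snd.const_mul c) measurable_fst
  rw [Measure.prod_apply_symm hset]
  have hpre : ∀ g : ℝ, ((fun x => (x, g)) ⁻¹' {p : ℝ × ℝ | c * p.2 < p.1}) = Ioi (c * g) := by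
    intro g; rfl
  simp_rw [hpre]
  have hmeas : Measurable (fun g : ℝ => expMeasure 1 (Ioi (c * g))) := by
    have : Antitone (fun g : ℝ => expMeasure 1 (Ioi (c * g))) := fun x y hxy =>
      measure_mono (Ioi_subset_Ioi (by nlinarith))
    exact this.measurable
  rw [gammaMeasure, lintegral_withDensity_eq_lintegral_mul _ (tc_measurable_gammaPDF a 1) hmeas]
  simp only [Pi.mul_apply]
  rw [tc_restrict_Ioi]
  have hcong : ∫⁻ w in Ioi (0:ℝ), gammaPDF a 1 w * expMeasure 1 (Ioi (c * w))
      = ∫⁻ g in Ioi (0:ℝ), ENNReal.ofReal (gammaPDFReal a 1 g * exp (-(c * g))) := by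
    refine setLIntegral_congr_fun measurableSet_Ioi (fun g (hg : 0 < g) => ?_)
    rw [tc_expMeasure_Ioi (by positivity), gammaPDF,
      ← ENNReal.ofReal_mul (gammaPDFReal_nonneg ha one_pos g)]
  rw [hcong]
  have hnn : 0 ≤ᵐ[volume.restrict (Ioi (0:ℝ))]
      (fun g => gammaPDFReal a 1 g * exp (-(c * g))) :=
    ae_of_all _ fun g => mul_nonneg (gammaPDFReal_nonneg ha one_pos g) (exp_nonneg _)
  have hm : AEStronglyMeasurable (fun g => gammaPDFReal a 1 g * exp (-(c * g)))
      (volume.restrict (Ioi (0:ℝ))) :=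
    ((measurable_gammaPDFReal a 1).mul (measurable_exp.comp
      ((measurable_id.const_mul c).neg))).aestronglyMeasurable
  rw [← integral_eq_lintegral_of_nonneg_ae hnn hm]
  have hval : ∫ g in Ioi (0:ℝ), gammaPDFReal a 1 g * exp (-(c * g))
      = (1 / Gamma a) * ∫ g in Ioi (0:ℝ), g ^ (a - 1) * exp (-((1 + c) * g)) := by
    rw [← integral_const_mul]
    refine setIntegral_congr_fun measurableSet_Ioi fun g (hg : 0 < g) => ?_
    rw [gammaPDFReal, if_pos hg.le]
    rw [Real.one_rpow]
    rw [show -((1 + c) * g) = -(1 * g) + -(c * g) by ring, Real.exp_add]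
    ring
  rw [hval, integral_rpow_mul_exp_neg_mul_Ioi ha (by linarith : (0:ℝ) < 1 + c)]
  rw [show (1:ℝ)/(1+c) = (1+c)⁻¹ from one_div _, Real.inv_rpow (by linarith),
    ← Real.rpow_neg (by linarith)]
  field_simp [Real.Gamma_pos_of_pos ha |>.ne']

lemma tc_F_nonneg (a : ℝ) (x : ℝ) : 0 ≤ gammaCDFReal a 1 x := cdf_nonneg _ x
lemma tc_F_le_one (a : ℝ) (x : ℝ) : gammaCDFReal a 1 x ≤ 1 := cdf_le_one _ x
lemma tc_F_meas (a : ℝ) : Measurable (gammaCDFReal a 1) := (gammaCDFReal a 1).mono.measurable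

lemma tc_joint_toReal {a1 a2 : ℝ} (ha1 : 0 < a1) (ha2 : 0 < a2) (c1 c2 : ℝ) :
    (∫⁻ w in Ioi (0:ℝ), ENNReal.ofReal (exp (-w)) *
        (gammaMeasure a1 1 (Ici (w / c1)) * gammaMeasure a2 1 (Ici (w / c2)))).toReal
      = ∫ w in Ioi (0:ℝ),
          (1 - gammaCDFReal a1 1 (w / c1)) * (1 - gammaCDFReal a2 1 (w / c2)) * exp (-w) := by
  have hcong : ∫⁻ w in Ioi (0:ℝ), ENNReal.ofReal (exp (-w)) *
        (gammaMeasure a1 1 (Ici (w / c1)) * gammaMeasure a2 1 (Ici (w / c2)))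
      = ∫⁻ w in Ioi (0:ℝ), ENNReal.ofReal
          ((1 - gammaCDFReal a1 1 (w / c1)) * (1 - gammaCDFReal a2 1 (w / c2)) * exp (-w)) := by
    refine lintegral_congr fun w => ?_
    rw [tc_gammaMeasure_Ici_eq ha1, tc_gammaMeasure_Ici_eq ha2,
      ← ENNReal.ofReal_mul (by linarith [tc_F_le_one a1 (w/c1)]),
      ← ENNReal.ofReal_mul (exp_nonneg _), mul_comm (exp (-w))]
  rw [hcong, ← integral_eq_lintegral_of_nonneg_ae]
  · refine ae_of_all _ fun w => ?_
    have h1 := tc_F_le_one a1 (w/c1); have h2 := tc_F_le_one a2 (w/c2)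
    simp only [Pi.zero_apply]
    exact mul_nonneg (mul_nonneg (by linarith) (by linarith)) (exp_nonneg _)
  · exact (((measurable_const.sub ((tc_F_meas a1).comp (measurable_id.div_const c1))).mul
      (measurable_const.sub ((tc_F_meas a2).comp (measurable_id.div_const c2)))).mul
      (measurable_exp.comp measurable_neg)).aestronglyMeasurable

lemma tc_marg_toReal {a1 : ℝ} (ha1 : 0 < a1) (c1 : ℝ) :
    (∫⁻ w in Ioi (0:ℝ), ENNReal.ofReal (exp (-w)) * gammaMeasure a1 1 (Ici (w / c1))).toReal
      = ∫ w in Ioi (0:ℝ), (1 - gammaCDFReal a1 1 (w / c1)) * exp (-w) := by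
  have hcong : ∫⁻ w in Ioi (0:ℝ), ENNReal.ofReal (exp (-w)) * gammaMeasure a1 1 (Ici (w / c1))
      = ∫⁻ w in Ioi (0:ℝ), ENNReal.ofReal ((1 - gammaCDFReal a1 1 (w / c1)) * exp (-w)) := by
    refine lintegral_congr fun w => ?_
    rw [tc_gammaMeasure_Ici_eq ha1, ← ENNReal.ofReal_mul (exp_nonneg _), mul_comm (exp (-w))]
  rw [hcong, ← integral_eq_lintegral_of_nonneg_ae]
  · refine ae_of_all _ fun w => ?_
    have h1 := tc_F_le_one a1 (w/c1)
    simp only [Pi.zero_apply]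
    exact mul_nonneg (by linarith) (exp_nonneg _)
  · exact ((measurable_const.sub ((tc_F_meas a1).comp (measurable_id.div_const c1))).mul
      (measurable_exp.comp measurable_neg)).aestronglyMeasurable

lemma tc_integrable {f : ℝ → ℝ} (hf : Measurable f) (h0 : ∀ x, 0 ≤ f x) (h1 : ∀ x, f x ≤ 1) :
    IntegrableOn (fun w => f w * exp (-w)) (Ioi (0:ℝ)) := by
  have hexp : IntegrableOn (fun w => exp (-w)) (Ioi (0:ℝ)) := by
    simpa using exp_neg_integrableOn_Ioi 0 (by norm_num : (0:ℝ) < 1)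
  refine Integrable.mono hexp
    ((hf.mul (measurable_exp.comp measurable_neg)).aestronglyMeasurable) (ae_of_all _ fun w => ?_)
  simp only [Real.norm_eq_abs, abs_mul, abs_of_nonneg (h0 w), abs_of_nonneg (exp_nonneg (-w))]
  nlinarith [h0 w, h1 w, exp_nonneg (-w)]

lemma tc_expand {f1 f2 : ℝ → ℝ} (hm1 : Measurable f1) (hm2 : Measurable f2)
    (h01 : ∀ x, 0 ≤ f1 x) (h11 : ∀ x, f1 x ≤ 1) (h02 : ∀ x, 0 ≤ f2 x) (h12 : ∀ x, f2 x ≤ 1) :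
    ∫ w in Ioi (0:ℝ), (1 - f1 w) * (1 - f2 w) * exp (-w)
      = (∫ w in Ioi (0:ℝ), (1 - f1 w) * exp (-w)) + (∫ w in Ioi (0:ℝ), (1 - f2 w) * exp (-w))
        - 1 + ∫ w in Ioi (0:ℝ), f1 w * f2 w * exp (-w) := by
  have i1 : IntegrableOn (fun w => (1 - f1 w) * exp (-w)) (Ioi (0:ℝ)) :=
    tc_integrable (measurable_const.sub hm1) (fun x => by linarith [h11 x])
      (fun x => by linarith [h01 x])
  have i2 : IntegrableOn (fun w => (1 - f2 w) * exp (-w)) (Ioi (0:ℝ)) :=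
    tc_integrable (measurable_const.sub hm2) (fun x => by linarith [h12 x])
      (fun x => by linarith [h02 x])
  have i3 : IntegrableOn (fun w => f1 w * f2 w * exp (-w)) (Ioi (0:ℝ)) :=
    tc_integrable (hm1.mul hm2) (fun x => mul_nonneg (h01 x) (h02 x))
      (fun x => mul_le_one₀ (h11 x) (h02 x) (h12 x))
  have iexp : IntegrableOn (fun w => exp (-w)) (Ioi (0:ℝ)) := by
    simpa using exp_neg_integrableOn_Ioi 0 (by norm_num : (0:ℝ) < 1)
  have key : ∀ w : ℝ, (1 - f1 w) * (1 - f2 w) * exp (-w)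
      = ((1 - f1 w) * exp (-w) + (1 - f2 w) * exp (-w)) - exp (-w) + f1 w * f2 w * exp (-w) := by
    intro w; ring
  rw [integral_congr_ae (ae_of_all _ key)]
  have h3 : Integrable (fun w => (1 - f1 w) * exp (-w) + (1 - f2 w) * exp (-w) - exp (-w))
      (volume.restrict (Ioi (0:ℝ))) := (i1.add i2).sub iexp
  have h4 : Integrable (fun w => (1 - f1 w) * exp (-w) + (1 - f2 w) * exp (-w))
      (volume.restrict (Ioi (0:ℝ))) := i1.add i2
  rw [integral_add h3 i3, integral_sub h4 iexp, integral_add i1 i2, integral_exp_neg_Ioi_zero]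

lemma tc_c_eq {a c u : ℝ} (ha : 0 < a) (hc : 0 < c) (h : 1 - u = (1 + c) ^ (-a)) :
    (1 - u) ^ (-(1/a)) - 1 = c := by
  rw [h, ← Real.rpow_mul (by linarith : (0:ℝ) ≤ 1 + c),
    show (-a) * (-(1/a)) = 1 by rw [neg_mul_neg, mul_one_div, div_self ha.ne'],
    Real.rpow_one]
  ring

lemma tc_event_null {Ω : Type*} [MeasureSpace Ω] {W G : Ω → ℝ}
    (hW : ∀ᵐ ω ∂(ℙ : Measure Ω), 0 < W ω) (hG : ∀ᵐ ω ∂(ℙ : Measure Ω), 0 < G ω)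
    {α s : ℝ} (hα : 0 < α) (hs : s ≤ 1) :
    (ℙ : Measure Ω) {ω | (1 + W ω / G ω) ^ α ≤ s} = 0 := by
  rw [measure_eq_zero_iff_ae_notMem]
  filter_upwards [hW, hG] with ω h1 h2
  intro hmem
  have hx1 : 1 < 1 + W ω / G ω := by have := div_pos h1 h2; linarith
  have : 1 < (1 + W ω / G ω) ^ α :=
    (Real.one_lt_rpow_iff_of_pos (by linarith)).mpr (Or.inl ⟨hx1, hα⟩)
  linarith

lemma tc_event_ae {Ω : Type*} [MeasureSpace Ω] {W G : Ω → ℝ}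
    (hW : ∀ᵐ ω ∂(ℙ : Measure Ω), 0 < W ω) (hG : ∀ᵐ ω ∂(ℙ : Measure Ω), 0 < G ω)
    {α s : ℝ} (hα : 0 < α) (hs : 1 < s) :
    ({ω | (1 + W ω / G ω) ^ α ≤ s} : Set Ω) =ᵐ[(ℙ : Measure Ω)]
      ({ω | W ω ≤ (s ^ α⁻¹ - 1) * G ω} : Set Ω) := by
  rw [Filter.eventuallyEq_set]
  filter_upwards [hW, hG] with ω h1 h2
  have hx0 : (0:ℝ) ≤ 1 + W ω / G ω := by positivity
  rw [← Real.le_rpow_inv_iff_of_pos hx0 (by linarith : (0:ℝ) ≤ s) hα]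
  rw [show (1 + W ω / G ω ≤ s ^ α⁻¹) ↔ (W ω / G ω ≤ s ^ α⁻¹ - 1) from
    ⟨fun h => by linarith, fun h => by linarith⟩]
  rw [div_le_iff₀ h2, mul_comm]

end TCAux

/-- If `W ~ Exp(1)`, `Gi ~ Gamma(αi,1)` are independent, then `U = (1 + W/G1)^{α1}` and
`V = (1 + W/G2)^{α2}` have the Two-component copula with parameters `α1, α2`. -/
theorem power_transform_has_two_component_copula
    {Ω : Type*} [MeasureSpace Ω] [IsProbabilityMeasure (ℙ : Measure Ω)]
    (W G1 G2 : Ω → ℝ) (hWmeas : Measurable W)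
    (hG1meas : Measurable G1) (hG2meas : Measurable G2)
    (hindep : iIndepFun ![W, G1, G2])
    (hW : Measure.map W ℙ = expMeasure 1)
    {α1 α2 : ℝ} (hα1 : 0 < α1) (hα2 : 0 < α2)
    (hG1 : Measure.map G1 ℙ = gammaMeasure α1 1)
    (hG2 : Measure.map G2 ℙ = gammaMeasure α2 1) :
    ∀ s t : ℝ,
      (ℙ {ω | (1 + W ω / G1 ω) ^ α1 ≤ s}).toReal ∈ Ioo (0:ℝ) 1 →
      (ℙ {ω | (1 + W ω / G2 ω) ^ α2 ≤ t}).toReal ∈ Ioo (0:ℝ) 1 →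
      (ℙ {ω | (1 + W ω / G1 ω) ^ α1 ≤ s ∧ (1 + W ω / G2 ω) ^ α2 ≤ t}).toReal
        = twoComponentCopula α1 α2
            (ℙ {ω | (1 + W ω / G1 ω) ^ α1 ≤ s}).toReal
            (ℙ {ω | (1 + W ω / G2 ω) ^ α2 ≤ t}).toReal := by
  intro s t hu hv
  haveI := isProbabilityMeasure_gammaMeasure hα1 one_pos
  haveI := isProbabilityMeasure_gammaMeasure hα2 one_pos
  haveI := isProbabilityMeasure_expMeasure one_pos
  -- a.s. positivity
  have posOf : ∀ (F : Ω → ℝ), Measurable F → (∀ x : ℝ, x ≤ 0 → Measure.map F ℙ (Iic x) = 0) →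
      ∀ᵐ ω ∂(ℙ : Measure Ω), 0 < F ω := by
    intro F hFm h0
    rw [ae_iff]
    have hset : {ω | ¬ 0 < F ω} = F ⁻¹' (Iic 0) := by ext ω; simp [not_lt]
    rw [hset, ← Measure.map_apply hFm measurableSet_Iic]
    exact h0 0 le_rfl
  have hWpos : ∀ᵐ ω ∂(ℙ : Measure Ω), 0 < W ω :=
    posOf W hWmeas (fun x hx => by rw [hW]; exact tc_gammaMeasure_Iic_nonpos hx)
  have hG1pos : ∀ᵐ ω ∂(ℙ : Measure Ω), 0 < G1 ω :=
    posOf G1 hG1meas (fun x hx => by rw [hG1]; exact tc_gammaMeasure_Iic_nonpos hx)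
  have hG2pos : ∀ᵐ ω ∂(ℙ : Measure Ω), 0 < G2 ω :=
    posOf G2 hG2meas (fun x hx => by rw [hG2]; exact tc_gammaMeasure_Iic_nonpos hx)
  -- s, t > 1
  have hs1 : 1 < s := by
    by_contra h
    push_neg at h
    have := tc_event_null hWpos hG1pos hα1 h
    rw [this] at hu
    simp at hu
  have ht1 : 1 < t := by
    by_contra h
    push_neg at h
    have := tc_event_null hWpos hG2pos hα2 h
    rw [this] at hv
    simp at hv
  set c1 : ℝ := s ^ α1⁻¹ - 1 with hc1def
  set c2 : ℝ := t ^ α2⁻¹ - 1 with hc2def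
  have hc1 : 0 < c1 := by
    have : 1 < s ^ α1⁻¹ :=
      (Real.one_lt_rpow_iff_of_pos (by linarith)).mpr (Or.inl ⟨hs1, by positivity⟩)
    simp only [hc1def]; linarith
  have hc2 : 0 < c2 := by
    have : 1 < t ^ α2⁻¹ :=
      (Real.one_lt_rpow_iff_of_pos (by linarith)).mpr (Or.inl ⟨ht1, by positivity⟩)
    simp only [hc2def]; linarith
  -- event identification
  have hE1 : ({ω | (1 + W ω / G1 ω) ^ α1 ≤ s} : Set Ω) =ᵐ[(ℙ : Measure Ω)]
      ({ω | W ω ≤ c1 * G1 ω} : Set Ω) := tc_event_ae hWpos hG1pos hα1 hs1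
  have hE2 : ({ω | (1 + W ω / G2 ω) ^ α2 ≤ t} : Set Ω) =ᵐ[(ℙ : Measure Ω)]
      ({ω | W ω ≤ c2 * G2 ω} : Set Ω) := tc_event_ae hWpos hG2pos hα2 ht1
  -- independence and joint laws
  have hvmeas : ∀ i, Measurable (![W, G1, G2] i) := by
    intro i; fin_cases i <;> simpa
  have h01 : IndepFun W G1 (ℙ : Measure Ω) := by
    have h := hindep.indepFun (show (0:Fin 3) ≠ 1 by decide)
    simpa using h
  have h02 : IndepFun W G2 (ℙ : Measure Ω) := by
    have h := hindep.indepFun (show (0:Fin 3) ≠ 2 by decide)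
    simpa using h
  have h12 : IndepFun G1 G2 (ℙ : Measure Ω) := by
    have h := hindep.indepFun (show (1:Fin 3) ≠ 2 by decide)
    simpa using h
  have hWpair : IndepFun W (fun ω => (G1 ω, G2 ω)) (ℙ : Measure Ω) := by
    have h := (hindep.indepFun_prodMk hvmeas 1 2 0 (by decide) (by decide)).symm
    simpa using h
  have hmap1 : Measure.map (fun ω => (W ω, G1 ω)) ℙ
      = (expMeasure 1).prod (gammaMeasure α1 1) := by
    rw [← hW, ← hG1]
    exact (indepFun_iff_map_prod_eq_prod_map_map hWmeas.aemeasurable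
      hG1meas.aemeasurable).mp h01
  have hmap2 : Measure.map (fun ω => (W ω, G2 ω)) ℙ
      = (expMeasure 1).prod (gammaMeasure α2 1) := by
    rw [← hW, ← hG2]
    exact (indepFun_iff_map_prod_eq_prod_map_map hWmeas.aemeasurable
      hG2meas.aemeasurable).mp h02
  have hmapJ : Measure.map (fun ω => (W ω, (G1 ω, G2 ω))) ℙ
      = (expMeasure 1).prod ((gammaMeasure α1 1).prod (gammaMeasure α2 1)) := by
    have hg : Measure.map (fun ω => (G1 ω, G2 ω)) ℙ
        = (gammaMeasure α1 1).prod (gammaMeasure α2 1) := by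
      rw [← hG1, ← hG2]
      exact (indepFun_iff_map_prod_eq_prod_map_map hG1meas.aemeasurable
        hG2meas.aemeasurable).mp h12
    rw [← hW, ← hg]
    exact (indepFun_iff_map_prod_eq_prod_map_map hWmeas.aemeasurable
      (hG1meas.prodMk hG2meas).aemeasurable).mp hWpair
  -- probabilities as product-measure values
  have hset1 : MeasurableSet {p : ℝ × ℝ | p.1 ≤ c1 * p.2} :=
    measurableSet_le measurable_fst (measurable_snd.const_mul c1)
  have hset2 : MeasurableSet {p : ℝ × ℝ | p.1 ≤ c2 * p.2} :=
    measurableSet_le measurable_fst (measurable_snd.const_mul c2)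
  have hA1 : (ℙ : Measure Ω) {ω | W ω ≤ c1 * G1 ω}
      = ((expMeasure 1).prod (gammaMeasure α1 1)) {p : ℝ × ℝ | p.1 ≤ c1 * p.2} := by
    rw [← hmap1, Measure.map_apply (hWmeas.prodMk hG1meas) hset1]
    rfl
  have hA2 : (ℙ : Measure Ω) {ω | W ω ≤ c2 * G2 ω}
      = ((expMeasure 1).prod (gammaMeasure α2 1)) {p : ℝ × ℝ | p.1 ≤ c2 * p.2} := by
    rw [← hmap2, Measure.map_apply (hWmeas.prodMk hG2meas) hset2]
    rfl
  have hsetJ : MeasurableSet {p : ℝ × ℝ × ℝ | p.1 ≤ c1 * p.2.1 ∧ p.1 ≤ c2 * p.2.2} :=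
    (measurableSet_le measurable_fst ((measurable_fst.comp measurable_snd).const_mul c1)).inter
      (measurableSet_le measurable_fst ((measurable_snd.comp measurable_snd).const_mul c2))
  have hAJ : (ℙ : Measure Ω) ({ω | W ω ≤ c1 * G1 ω} ∩ {ω | W ω ≤ c2 * G2 ω})
      = ((expMeasure 1).prod ((gammaMeasure α1 1).prod (gammaMeasure α2 1)))
          {p : ℝ × ℝ × ℝ | p.1 ≤ c1 * p.2.1 ∧ p.1 ≤ c2 * p.2.2} := by
    rw [← hmapJ, Measure.map_apply (hWmeas.prodMk (hG1meas.prodMk hG2meas)) hsetJ]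
    rfl
  -- real-valued formulas
  set u := (ℙ {ω | (1 + W ω / G1 ω) ^ α1 ≤ s}).toReal with hudef
  set v := (ℙ {ω | (1 + W ω / G2 ω) ^ α2 ≤ t}).toReal with hvdef
  have huval : u = ∫ w in Ioi (0:ℝ), (1 - gammaCDFReal α1 1 (w / c1)) * exp (-w) := by
    rw [hudef, measure_congr hE1, hA1, tc_marg_repr _ hc1, tc_marg_toReal hα1]
  have hvval : v = ∫ w in Ioi (0:ℝ), (1 - gammaCDFReal α2 1 (w / c2)) * exp (-w) := by
    rw [hvdef, measure_congr hE2, hA2, tc_marg_repr _ hc2, tc_marg_toReal hα2]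
  -- Laplace transform identities
  have hlap1 : 1 - u = (1 + c1) ^ (-α1) := by
    have hcompl : ({p : ℝ × ℝ | p.1 ≤ c1 * p.2})ᶜ = {p : ℝ × ℝ | c1 * p.2 < p.1} := by
      ext p; simp [not_le]
    have hsum := measure_add_measure_compl
      (μ := (expMeasure 1).prod (gammaMeasure α1 1)) hset1
    rw [measure_univ, hcompl] at hsum
    have h3 := congrArg ENNReal.toReal hsum
    rw [ENNReal.toReal_add (measure_ne_top _ _) (measure_ne_top _ _), ENNReal.toReal_one] at h3
    rw [hudef, measure_congr hE1, hA1, ← tc_compl_value hα1 hc1]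
    linarith
  have hlap2 : 1 - v = (1 + c2) ^ (-α2) := by
    have hcompl : ({p : ℝ × ℝ | p.1 ≤ c2 * p.2})ᶜ = {p : ℝ × ℝ | c2 * p.2 < p.1} := by
      ext p; simp [not_le]
    have hsum := measure_add_measure_compl
      (μ := (expMeasure 1).prod (gammaMeasure α2 1)) hset2
    rw [measure_univ, hcompl] at hsum
    have h3 := congrArg ENNReal.toReal hsum
    rw [ENNReal.toReal_add (measure_ne_top _ _) (measure_ne_top _ _), ENNReal.toReal_one] at h3
    rw [hvdef, measure_congr hE2, hA2, ← tc_compl_value hα2 hc2]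
    linarith
  have he1 : (1 - u) ^ (-(1/α1)) - 1 = c1 := tc_c_eq hα1 hc1 hlap1
  have he2 : (1 - v) ^ (-(1/α2)) - 1 = c2 := tc_c_eq hα2 hc2 hlap2
  -- joint probability
  have hEJ : ({ω | (1 + W ω / G1 ω) ^ α1 ≤ s ∧ (1 + W ω / G2 ω) ^ α2 ≤ t} : Set Ω)
      =ᵐ[(ℙ : Measure Ω)] ({ω | W ω ≤ c1 * G1 ω} ∩ {ω | W ω ≤ c2 * G2 ω} : Set Ω) := by
    have := hE1.inter hE2
    exact this
  have hjoint : (ℙ {ω | (1 + W ω / G1 ω) ^ α1 ≤ s ∧ (1 + W ω / G2 ω) ^ α2 ≤ t}).toReal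
      = ∫ w in Ioi (0:ℝ), (1 - gammaCDFReal α1 1 (w / c1)) * (1 - gammaCDFReal α2 1 (w / c2))
          * exp (-w) := by
    rw [measure_congr hEJ, hAJ, tc_joint_repr _ _ hc1 hc2, tc_joint_toReal hα1 hα2]
  -- conclusion
  rw [hjoint, twoComponentCopula, he1, he2]
  have hexp := tc_expand (f1 := fun w => gammaCDFReal α1 1 (w / c1))
    (f2 := fun w => gammaCDFReal α2 1 (w / c2))
    ((tc_F_meas α1).comp (measurable_id.div_const c1))
    ((tc_F_meas α2).comp (measurable_id.div_const c2))
    (fun x => tc_F_nonneg α1 _) (fun x => tc_F_le_one α1 _)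
    (fun x => tc_F_nonneg α2 _) (fun x => tc_F_le_one α2 _)
  rw [hexp, ← huval, ← hvval]
end
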